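/- arXiv:1802.07059 — 3 statements merged into one kernel-verified Lean document; each statement's English description precedes it below -/
import Mathlib

section
/- Let G be a finite simple graph and let J, J' be subsets of the vertex set of G such that the induced subgraphs G|_J and G|_{J'} are both connected and J ∩ J' is nonempty. If the induced subgraph G|_{J ∩ J'} is not connected, then there exists a subset I of the vertex set of G such that the induced subgraph G|_I is either a cycle with at least 4 vertices or a diamond graph (the complete graph on 4 vertices with one edge removed). -/
open SimpleGraph

def diamondGraph : SimpleGraph (Fin 4) := (completeGraph (Fin 4)).deleteEdges {s(2,3)}

section Aux

variable {V : Type*} (G : SimpleGraph V)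

/-- The desired conclusion. -/
def Concl : Prop :=
  ∃ I : Set V,
    (∃ k : ℕ, 4 ≤ k ∧ Nonempty (G.induce I ≃g cycleGraph k)) ∨
    Nonempty (G.induce I ≃g diamondGraph)

lemma cycleGraph_adj_val {k : ℕ} (hk : 2 ≤ k) (p q : Fin k) :
    (cycleGraph k).Adj p q ↔
      ((q : ℕ) = p + 1 ∨ (p : ℕ) = q + 1 ∨ ((p : ℕ) = 0 ∧ (q : ℕ) = k - 1) ∨
        ((q : ℕ) = 0 ∧ (p : ℕ) = k - 1)) := by
  obtain ⟨n, rfl⟩ : ∃ n, k = n + 2 := ⟨k - 2, by omega⟩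
  have hm : ∀ a b : Fin (n+2), (a - b = 1) ↔
      ((a : ℕ) = b + 1 ∨ ((b : ℕ) = n + 1 ∧ (a : ℕ) = 0)) := by
    intro a b
    rw [Fin.ext_iff, Fin.sub_def]
    simp only [Fin.val_one]
    have ha := a.isLt; have hb := b.isLt
    constructor
    · intro h
      rcases Nat.lt_or_ge (((n+2) - b.val) + a.val) (n+2) with hlt | hge
      · rw [Nat.mod_eq_of_lt hlt] at h; omega
      · rw [Nat.mod_eq_sub_mod hge, Nat.mod_eq_of_lt (by omega)] at h; omega
    · intro h
      rcases h with h | ⟨h1, h2⟩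
      · have he : ((n+2) - b.val) + a.val = (n + 2) + 1 := by omega
        rw [he, Nat.add_mod_left]
        exact Nat.mod_eq_of_lt (by omega)
      · have he : ((n+2) - b.val) + a.val = 1 := by omega
        rw [he]
        exact Nat.mod_eq_of_lt (by omega)
  rw [cycleGraph_adj, hm, hm]
  have hp := p.isLt; have hq := q.isLt
  omega

lemma iso_of_fun {k : ℕ} (H : SimpleGraph (Fin k)) (c : Fin k → V)
    (hinj : Function.Injective c)
    (hadj : ∀ p q, G.Adj (c p) (c q) ↔ H.Adj p q) :
    Nonempty (G.induce (Set.range c) ≃g H) := by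
  have he : ∀ a : Set.range c, c ((Equiv.ofInjective c hinj).symm a) = ↑a := fun a =>
    congrArg Subtype.val ((Equiv.ofInjective c hinj).apply_symm_apply a)
  refine ⟨⟨(Equiv.ofInjective c hinj).symm, fun {a b} => ?_⟩⟩
  rw [← hadj, he, he]
  simp [comap_adj]

lemma diamond_case {a b x y : V} (hxy : G.Adj x y) (hax : G.Adj a x) (hay : G.Adj a y)
    (hxb : G.Adj x b) (hyb : G.Adj y b) (hab : ¬ G.Adj a b) (hne : a ≠ b) : Concl G := by
  have dadj : ∀ p q : Fin 4, diamondGraph.Adj p q ↔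
      (p ≠ q ∧ ¬(p = 2 ∧ q = 3) ∧ ¬(p = 3 ∧ q = 2)) := by
    intro p q
    show ((completeGraph (Fin 4)).deleteEdges {s(2,3)}).Adj p q ↔ _
    rw [deleteEdges_adj]
    simp only [completeGraph_eq_top, top_adj, Set.mem_singleton_iff, Sym2.eq_iff]
    tauto
  have hba : ¬ G.Adj b a := fun h => hab h.symm
  have d1 : x ≠ y := hxy.ne
  have d2 : a ≠ x := hax.ne
  have d3 : a ≠ y := hay.ne
  have d4 : x ≠ b := hxb.ne
  have d5 : y ≠ b := hyb.ne
  have hc : ∀ p : Fin 4, (fun p : Fin 4 => if p = 0 then x else if p = 1 then y else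
      if p = 2 then a else b) p = if p = 0 then x else if p = 1 then y else
      if p = 2 then a else b := fun _ => rfl
  set c : Fin 4 → V := fun p => if p = 0 then x else if p = 1 then y else
      if p = 2 then a else b with hcdef
  have hinj : Function.Injective c := by
    intro p q h
    rw [hcdef] at h
    fin_cases p <;> fin_cases q <;> simp_all
  have hadj : ∀ p q, G.Adj (c p) (c q) ↔ diamondGraph.Adj p q := by
    intro p q
    rw [dadj, hcdef]
    fin_cases p <;> fin_cases q <;>
      simp [hxy, hxy.symm, hax, hax.symm, hay, hay.symm, hxb, hxb.symm, hyb, hyb.symm,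
        hab, hba]
  exact ⟨Set.range c, Or.inr (iso_of_fun G diamondGraph c hinj hadj)⟩

/-- Two internally disjoint paths (as index functions) between two distinct
non-adjacent vertices. -/
structure Config (m₁ m₂ : ℕ) (f g : ℕ → V) : Prop where
  hf : ∀ i < m₁, G.Adj (f i) (f (i+1))
  hg : ∀ i < m₂, G.Adj (g i) (g (i+1))
  finj : ∀ i ≤ m₁, ∀ j ≤ m₁, f i = f j → i = j
  ginj : ∀ i ≤ m₂, ∀ j ≤ m₂, g i = g j → i = j
  h0 : f 0 = g 0
  hm : f m₁ = g m₂
  hab : ¬ G.Adj (f 0) (f m₁)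
  hne : f 0 ≠ f m₁
  hdisj : ∀ i j, 0 < i → i < m₁ → 0 < j → j < m₂ → f i ≠ g j

variable {G}

lemma Config.symm {m₁ m₂ : ℕ} {f g : ℕ → V} (hc : Config G m₁ m₂ f g) :
    Config G m₂ m₁ g f where
  hf := hc.hg
  hg := hc.hf
  finj := hc.ginj
  ginj := hc.finj
  h0 := hc.h0.symm
  hm := hc.hm.symm
  hab := by rw [← hc.h0, ← hc.hm]; exact hc.hab
  hne := by rw [← hc.h0, ← hc.hm]; exact hc.hne
  hdisj := fun i j h1 h2 h3 h4 => (hc.hdisj j i h3 h4 h1 h2).symm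

lemma Config.two_le₁ {m₁ m₂ : ℕ} {f g : ℕ → V} (hc : Config G m₁ m₂ f g) : 2 ≤ m₁ := by
  by_contra h
  interval_cases m₁
  · exact hc.hne rfl
  · exact hc.hab (hc.hf 0 one_pos)

lemma Config.two_le₂ {m₁ m₂ : ℕ} {f g : ℕ → V} (hc : Config G m₁ m₂ f g) : 2 ≤ m₂ :=
  hc.symm.two_le₁

lemma Config.reverse {m₁ m₂ : ℕ} {f g : ℕ → V} (hc : Config G m₁ m₂ f g) :
    Config G m₁ m₂ (fun t => f (m₁ - t)) (fun t => g (m₂ - t)) where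
  hf := by
    intro i hi
    have h1 : m₁ - i = (m₁ - (i+1)) + 1 := by omega
    rw [h1]
    exact (hc.hf (m₁ - (i+1)) (by omega)).symm
  hg := by
    intro i hi
    have h1 : m₂ - i = (m₂ - (i+1)) + 1 := by omega
    rw [h1]
    exact (hc.hg (m₂ - (i+1)) (by omega)).symm
  finj := by
    intro i hi j hj h
    have := hc.finj (m₁ - i) (by omega) (m₁ - j) (by omega) h
    omega
  ginj := by
    intro i hi j hj h
    have := hc.ginj (m₂ - i) (by omega) (m₂ - j) (by omega) h
    omega
  h0 := by simpa using hc.hm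
  hm := by simpa using hc.h0
  hab := by
    simp only [Nat.sub_zero, Nat.sub_self]
    exact fun h => hc.hab h.symm
  hne := by
    simp only [Nat.sub_zero, Nat.sub_self]
    exact hc.hne.symm
  hdisj := by
    intro i j h1 h2 h3 h4
    exact hc.hdisj (m₁ - i) (m₂ - j) (by omega) (by omega) (by omega) (by omega)

/-- Shortcut a path along a chord. -/
lemma Config.shortcut {m₁ m₂ : ℕ} {f g : ℕ → V} (hc : Config G m₁ m₂ f g)
    {i j : ℕ} (hij : i + 2 ≤ j) (hjm : j ≤ m₁) (hchord : G.Adj (f i) (f j)) :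
    Config G (i + 1 + (m₁ - j)) m₂ (fun t => if t ≤ i then f t else f (t + (j - i - 1))) g := by
  have idx_le : ∀ t ≤ i + 1 + (m₁ - j), (if t ≤ i then t else t + (j - i - 1)) ≤ m₁ := by
    intro t ht; split <;> omega
  have idx_val : ∀ t, (fun t => if t ≤ i then f t else f (t + (j - i - 1))) t
      = f (if t ≤ i then t else t + (j - i - 1)) := by
    intro t
    show (if t ≤ i then f t else f (t + (j - i - 1))) = _
    split <;> rfl
  constructor
  · -- hf
    intro t ht
    simp only [idx_val]
    rcases Nat.lt_trichotomy t i with h | h | h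
    · rw [if_pos (by omega), if_pos (by omega)]
      exact hc.hf t (by omega)
    · subst h
      rw [if_pos le_rfl, if_neg (by omega)]
      have : t + 1 + (j - t - 1) = j := by omega
      rw [this]
      exact hchord
    · rw [if_neg (by omega), if_neg (by omega)]
      have h2 : t + 1 + (j - i - 1) = (t + (j - i - 1)) + 1 := by omega
      rw [h2]
      exact hc.hf (t + (j - i - 1)) (by omega)
  · exact hc.hg
  · -- finj
    intro t1 ht1 t2 ht2 h
    simp only [idx_val] at h
    have := hc.finj _ (idx_le t1 ht1) _ (idx_le t2 ht2) h
    split at this <;> split at this <;> omega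
  · exact hc.ginj
  · simpa using hc.h0
  · -- hm
    have h1 : ¬ (i + 1 + (m₁ - j) ≤ i) := by omega
    simp only [h1, if_neg, if_false]
    have h2 : i + 1 + (m₁ - j) + (j - i - 1) = m₁ := by omega
    rw [h2]
    exact hc.hm
  · -- hab
    have h1 : ¬ (i + 1 + (m₁ - j) ≤ i) := by omega
    simp only [h1, if_neg, if_false, if_pos (Nat.zero_le i)]
    have h2 : i + 1 + (m₁ - j) + (j - i - 1) = m₁ := by omega
    rw [h2]
    simpa using hc.hab
  · have h1 : ¬ (i + 1 + (m₁ - j) ≤ i) := by omega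
    simp only [h1, if_neg, if_false, if_pos (Nat.zero_le i)]
    have h2 : i + 1 + (m₁ - j) + (j - i - 1) = m₁ := by omega
    rw [h2]
    simpa using hc.hne
  · -- hdisj
    intro t l ht1 ht2 hl1 hl2
    simp only [idx_val]
    refine hc.hdisj _ l ?_ ?_ hl1 hl2
    · split <;> omega
    · split <;> omega

/-- Cross-chord reduction: given a chord between the interiors of the two paths,
and assuming the start is not adjacent to the chord's `g`-endpoint, we get a smaller
configuration. -/
lemma Config.cross {m₁ m₂ : ℕ} {f g : ℕ → V} (hc : Config G m₁ m₂ f g)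
    {i j : ℕ} (him : i < m₁) (hj : 0 < j) (hjm : j < m₂)
    (hchord : G.Adj (f i) (g j)) (hA : ¬ G.Adj (f 0) (g j)) :
    Config G (i + 1) j (fun t => if t ≤ i then f t else g j) g := by
  constructor
  · intro t ht
    rcases Nat.lt_trichotomy t i with h | h | h
    · simp only [if_pos (by omega : t ≤ i), if_pos (by omega : t + 1 ≤ i)]
      exact hc.hf t (by omega)
    · subst h
      simp only [if_pos le_rfl, if_neg (by omega : ¬ (t + 1 ≤ t))]
      exact hchord
    · omega
  · intro t ht; exact hc.hg t (by omega)
  · intro t1 ht1 t2 ht2 h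
    by_cases c1 : t1 ≤ i <;> by_cases c2 : t2 ≤ i <;>
      simp only [c1, c2, if_pos, if_neg, if_true, if_false] at h
    · exact hc.finj t1 (by omega) t2 (by omega) h
    · exfalso
      rcases Nat.eq_zero_or_pos t1 with rfl | hpos
      · rw [hc.h0] at h
        have := hc.ginj 0 (by omega) j (by omega) h
        omega
      · exact hc.hdisj t1 j hpos (by omega) hj hjm h
    · exfalso
      rcases Nat.eq_zero_or_pos t2 with rfl | hpos
      · rw [hc.h0] at h
        have := hc.ginj 0 (by omega) j (by omega) h.symm
        omega
      · exact hc.hdisj t2 j hpos (by omega) hj hjm h.symm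
    · omega
  · intro t1 ht1 t2 ht2 h; exact hc.ginj t1 (by omega) t2 (by omega) h
  · simp only [if_pos (Nat.zero_le i)]; exact hc.h0
  · simp only [if_neg (by omega : ¬ (i + 1 ≤ i))]
  · simp only [if_pos (Nat.zero_le i), if_neg (by omega : ¬ (i + 1 ≤ i))]
    exact hA
  · simp only [if_pos (Nat.zero_le i), if_neg (by omega : ¬ (i + 1 ≤ i))]
    intro h
    rw [hc.h0] at h
    have := hc.ginj 0 (by omega) j (by omega) h
    omega
  · intro t l ht1 ht2 hl1 hl2
    simp only [if_pos (by omega : t ≤ i)]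
    exact hc.hdisj t l ht1 (by omega) hl1 (by omega)

/-- The chordless case: the union of the two paths is an induced cycle. -/
lemma Config.cycle_case {m₁ m₂ : ℕ} {f g : ℕ → V} (hc : Config G m₁ m₂ f g)
    (nC1 : ∀ i j, i + 2 ≤ j → j ≤ m₁ → ¬ G.Adj (f i) (f j))
    (nC2 : ∀ i j, i + 2 ≤ j → j ≤ m₂ → ¬ G.Adj (g i) (g j))
    (nC3 : ∀ i j, 0 < i → i < m₁ → 0 < j → j < m₂ → ¬ G.Adj (f i) (g j)) :
    Concl G := by
  have h₁ := hc.two_le₁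
  have h₂ := hc.two_le₂
  set k := m₁ + m₂ with hk
  set c : ℕ → V := fun t => if t ≤ m₁ then f t else g (k - t) with hcdef
  have cval : ∀ t, c t = if t ≤ m₁ then f t else g (k - t) := fun t => rfl
  -- injectivity on [0, k)
  have cinj : ∀ s t, s < k → t < k → c s = c t → s = t := by
    intro s t hs ht h
    rw [cval, cval] at h
    by_cases c1 : s ≤ m₁ <;> by_cases c2 : t ≤ m₁ <;>
      simp only [c1, c2, if_pos, if_neg, if_true, if_false] at h
    · exact hc.finj s c1 t c2 h
    · exfalso
      rcases Nat.eq_zero_or_pos s with rfl | hpos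
      · rw [hc.h0] at h
        have := hc.ginj 0 (by omega) (k - t) (by omega) h
        omega
      · rcases Nat.lt_or_ge s m₁ with hlt | hge
        · exact hc.hdisj s (k - t) hpos hlt (by omega) (by omega) h
        · have hsm : s = m₁ := by omega
          subst hsm
          rw [hc.hm] at h
          have := hc.ginj m₂ (by omega) (k - t) (by omega) h
          omega
    · exfalso
      rcases Nat.eq_zero_or_pos t with rfl | hpos
      · rw [hc.h0] at h
        have := hc.ginj 0 (by omega) (k - s) (by omega) h.symm
        omega
      · rcases Nat.lt_or_ge t m₁ with hlt | hge
        · exact hc.hdisj t (k - s) hpos hlt (by omega) (by omega) h.symm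
        · have htm : t = m₁ := by omega
          subst htm
          rw [hc.hm] at h
          have := hc.ginj m₂ (by omega) (k - s) (by omega) h.symm
          omega
    · have := hc.ginj (k - s) (by omega) (k - t) (by omega) h
      omega
  -- consecutive vertices are adjacent
  have hconsec : ∀ s, s + 1 < k → G.Adj (c s) (c (s + 1)) := by
    intro s hs
    rcases Nat.lt_trichotomy s m₁ with h | h | h
    · by_cases h2 : s + 1 ≤ m₁
      · rw [cval, cval, if_pos (by omega), if_pos h2]
        exact hc.hf s (by omega)
      · omega
    · subst h
      rw [cval, cval, if_pos le_rfl, if_neg (by omega)]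
      have he : k - (s + 1) = m₂ - 1 := by omega
      rw [he, hc.hm]
      have he2 : m₂ = (m₂ - 1) + 1 := by omega
      rw [he2]
      exact (hc.hg (m₂ - 1) (by omega)).symm
    · rw [cval, cval, if_neg (by omega), if_neg (by omega)]
      have he : k - s = (k - (s + 1)) + 1 := by omega
      rw [he]
      exact (hc.hg (k - (s+1)) (by omega)).symm
  have hwrap : G.Adj (c (k - 1)) (c 0) := by
    rw [cval, cval, if_neg (by omega), if_pos (Nat.zero_le _), hc.h0]
    have he : k - (k - 1) = 1 := by omega
    rw [he]
    exact (hc.hg 0 (by omega)).symm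
  -- adjacency implies consecutive
  have haux : ∀ s t, s < t → t < k → G.Adj (c s) (c t) → (t = s + 1 ∨ (s = 0 ∧ t = k - 1)) := by
    intro s t hst ht hadj
    rw [cval, cval] at hadj
    by_cases c2 : t ≤ m₁
    · rw [if_pos (by omega), if_pos c2] at hadj
      by_cases h2 : s + 2 ≤ t
      · exact absurd hadj (nC1 s t h2 c2)
      · omega
    · rw [if_neg c2] at hadj
      set l := k - t with hl
      have hl1 : 0 < l := by omega
      have hl2 : l < m₂ := by omega
      by_cases c1 : s ≤ m₁
      · rw [if_pos c1] at hadj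
        rcases Nat.eq_zero_or_pos s with rfl | hpos
        · rw [hc.h0] at hadj
          by_cases h2 : 2 ≤ l
          · exact absurd hadj (nC2 0 l (by omega) (by omega))
          · right
            omega
        · rcases Nat.lt_or_ge s m₁ with hlt | hge
          · exact absurd hadj (nC3 s l hpos hlt hl1 hl2)
          · have hsm : s = m₁ := by omega
            subst hsm
            rw [hc.hm] at hadj
            by_cases h2 : l + 2 ≤ m₂
            · exact absurd hadj.symm (nC2 l m₂ h2 le_rfl)
            · left; omega
      · rw [if_neg c1] at hadj
        have hks : k - s ≤ m₂ - 1 := by omega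
        by_cases h2 : l + 2 ≤ k - s
        · exact absurd hadj.symm (nC2 l (k - s) h2 (by omega))
        · left; omega
  -- now build the isomorphism
  set C : Fin k → V := fun p => c p.val with hC
  have hCinj : Function.Injective C := by
    intro p q h
    exact Fin.ext (cinj p.val q.val p.isLt q.isLt h)
  have hCadj : ∀ p q, G.Adj (C p) (C q) ↔ (cycleGraph k).Adj p q := by
    intro p q
    rw [cycleGraph_adj_val (by omega) p q]
    constructor
    · intro h
      rcases Nat.lt_trichotomy p.val q.val with hlt | heq | hgt
      · rcases haux p.val q.val hlt q.isLt h with h1 | h1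
        · left; exact h1
        · right; right; left; exact h1
      · exfalso
        have : C p = C q := by rw [hC]; simp only; rw [heq]
        rw [this] at h
        exact G.irrefl h
      · rcases haux q.val p.val hgt p.isLt h.symm with h1 | h1
        · right; left; exact h1
        · right; right; right; exact h1
    · intro h
      have hp := p.isLt; have hq := q.isLt
      rcases h with h | h | ⟨h1, h2⟩ | ⟨h1, h2⟩
      · rw [hC]; simp only; rw [h]; exact hconsec p.val (by omega)
      · rw [hC]; simp only; rw [h]; exact (hconsec q.val (by omega)).symm
      · rw [hC]; simp only; rw [h1, h2]; exact hwrap.symm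
      · rw [hC]; simp only; rw [h1, h2]; exact hwrap
  exact ⟨Set.range C, Or.inl ⟨k, by omega, iso_of_fun G (cycleGraph k) C hCinj hCadj⟩⟩

/-- Main induction: any configuration yields the conclusion. -/
lemma Config.concl : ∀ (n m₁ m₂ : ℕ) (f g : ℕ → V), m₁ + m₂ ≤ n →
    Config G m₁ m₂ f g → Concl G := by
  intro n
  induction n with
  | zero =>
    intro m₁ m₂ f g hle hc
    have := hc.two_le₁
    omega
  | succ n IH =>
    intro m₁ m₂ f g hle hc
    have h₁ := hc.two_le₁
    have h₂ := hc.two_le₂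
    by_cases hC1 : ∃ i j, i + 2 ≤ j ∧ j ≤ m₁ ∧ G.Adj (f i) (f j)
    · obtain ⟨i, j, hij, hjm, hchord⟩ := hC1
      exact IH _ _ _ _ (by omega) (hc.shortcut hij hjm hchord)
    by_cases hC2 : ∃ i j, i + 2 ≤ j ∧ j ≤ m₂ ∧ G.Adj (g i) (g j)
    · obtain ⟨i, j, hij, hjm, hchord⟩ := hC2
      exact IH _ _ _ _ (by omega) (hc.symm.shortcut hij hjm hchord)
    by_cases hC3 : ∃ i j, 0 < i ∧ i < m₁ ∧ 0 < j ∧ j < m₂ ∧ G.Adj (f i) (g j)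
    · obtain ⟨i, j, hi, him, hj, hjm, hchord⟩ := hC3
      -- four possible reductions; if all blocked, we find a diamond
      by_cases hb₁ : G.Adj (f 0) (g j)
      case neg =>
        exact IH _ _ _ _ (by omega) (hc.cross him hj hjm hchord hb₁)
      by_cases hb₂ : G.Adj (f m₁) (g j)
      case neg =>
        -- use reversed configuration
        have rc := hc.reverse
        have hch' : G.Adj ((fun t => f (m₁ - t)) (m₁ - i)) ((fun t => g (m₂ - t)) (m₂ - j)) := by
          simp only
          have e1 : m₁ - (m₁ - i) = i := by omega
          have e2 : m₂ - (m₂ - j) = j := by omega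
          rw [e1, e2]
          exact hchord
        have hA' : ¬ G.Adj ((fun t => f (m₁ - t)) 0) ((fun t => g (m₂ - t)) (m₂ - j)) := by
          simp only [Nat.sub_zero]
          have e2 : m₂ - (m₂ - j) = j := by omega
          rw [e2]
          exact hb₂
        exact IH _ _ _ _ (by omega) (rc.cross (by omega) (by omega) (by omega) hch' hA')
      by_cases hb₃ : G.Adj (f 0) (f i)
      case neg =>
        have sc := hc.symm
        have hA' : ¬ G.Adj (g 0) (f i) := by
          rw [← hc.h0]; exact hb₃
        exact IH _ _ _ _ (by omega) (sc.cross hjm hi him hchord.symm hA')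
      by_cases hb₄ : G.Adj (f m₁) (f i)
      case neg =>
        have rc := hc.reverse.symm
        have hch' : G.Adj ((fun t => g (m₂ - t)) (m₂ - j)) ((fun t => f (m₁ - t)) (m₁ - i)) := by
          simp only
          have e1 : m₁ - (m₁ - i) = i := by omega
          have e2 : m₂ - (m₂ - j) = j := by omega
          rw [e1, e2]
          exact hchord.symm
        have hA' : ¬ G.Adj ((fun t => g (m₂ - t)) 0) ((fun t => f (m₁ - t)) (m₁ - i)) := by
          simp only [Nat.sub_zero]
          have e1 : m₁ - (m₁ - i) = i := by omega
          rw [e1, ← hc.hm]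
          exact hb₄
        exact IH _ _ _ _ (by omega) (rc.cross (by omega) (by omega) (by omega) hch' hA')
      -- all blocked: derive i = 1, i = m₁ - 1, j = 1, j = m₂ - 1
      have hj1 : j = 1 := by
        by_contra hne
        have h : G.Adj (g 0) (g j) := by rw [← hc.h0]; exact hb₁
        exact hC2 ⟨0, j, by omega, by omega, h⟩
      have hj2 : j = m₂ - 1 := by
        by_contra hne
        have h : G.Adj (g j) (g m₂) := by rw [← hc.hm]; exact hb₂.symm
        exact hC2 ⟨j, m₂, by omega, le_rfl, h⟩
      have hi1 : i = 1 := by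
        by_contra hne
        exact hC1 ⟨0, i, by omega, by omega, hb₃⟩
      have hi2 : i = m₁ - 1 := by
        by_contra hne
        exact hC1 ⟨i, m₁, by omega, le_rfl, hb₄.symm⟩
      have hm1 : m₁ = 2 := by omega
      have hm2 : m₂ = 2 := by omega
      subst hm1 hm2 hi1 hj1
      exact diamond_case G hchord (hc.hf 0 (by omega)) (by rw [hc.h0]; exact hc.hg 0 (by omega))
        (hc.hf 1 (by omega)) (by rw [hc.hm]; exact hc.hg 1 (by omega)) hc.hab hc.hne
    · push_neg at hC1 hC2 hC3
      exact hc.cycle_case (fun i j h1 h2 => hC1 i j h1 h2)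
        (fun i j h1 h2 => hC2 i j h1 h2)
        (fun i j h1 h2 h3 h4 => hC3 i j h1 h2 h3 h4)

/-- Splicing out a repeated vertex of a walk-function. -/
lemma splice {P : V → Prop} {f : ℕ → V} {n i j : ℕ} (hij : i < j) (hjn : j ≤ n)
    (heq : f i = f j) (hmem : ∀ t ≤ n, P (f t)) (hadj : ∀ t < n, G.Adj (f t) (f (t+1))) :
    ∃ f' : ℕ → V, (∀ t ≤ i + (n - j), P (f' t)) ∧ (∀ t < i + (n - j), G.Adj (f' t) (f' (t+1))) ∧
      f' 0 = f 0 ∧ f' (i + (n - j)) = f n := by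
  refine ⟨fun t => if t ≤ i then f t else f (t + (j - i)), ?_, ?_, ?_, ?_⟩
  · intro t ht
    show P (if t ≤ i then f t else f (t + (j - i)))
    split
    · exact hmem t (by omega)
    · exact hmem (t + (j - i)) (by omega)
  · intro t ht
    rcases Nat.lt_trichotomy t i with h | h | h
    · simp only [if_pos (by omega : t ≤ i), if_pos (by omega : t + 1 ≤ i)]
      exact hadj t (by omega)
    · subst h
      simp only [if_pos le_rfl, if_neg (by omega : ¬ (t + 1 ≤ t))]
      have he : t + 1 + (j - t) = j + 1 := by omega
      rw [he, heq]
      exact hadj j (by omega)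
    · simp only [if_neg (by omega : ¬ t ≤ i), if_neg (by omega : ¬ (t + 1 ≤ i))]
      have he : t + 1 + (j - i) = (t + (j - i)) + 1 := by omega
      rw [he]
      exact hadj (t + (j - i)) (by omega)
  · simp
  · show (if i + (n - j) ≤ i then f (i + (n - j)) else f (i + (n - j) + (j - i))) = f n
    by_cases h : i + (n - j) ≤ i
    · rw [if_pos h]
      have h1 : n = j := by omega
      have h2 : i + (n - j) = i := by omega
      rw [h2, heq, h1]
    · rw [if_neg h]
      have h2 : i + (n - j) + (j - i) = n := by omega
      rw [h2]

end Aux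

theorem stmt0 {V : Type*} [Fintype V] (G : SimpleGraph V) (J J' : Set V)
    (hJ : (G.induce J).Connected) (hJ' : (G.induce J').Connected)
    (hne : (J ∩ J').Nonempty) (hdisc : ¬ (G.induce (J ∩ J')).Connected) :
    ∃ I : Set V,
      (∃ k : ℕ, 4 ≤ k ∧ Nonempty (G.induce I ≃g cycleGraph k)) ∨
      Nonempty (G.induce I ≃g diamondGraph) := by
  classical
  obtain ⟨w0, hw0⟩ := hne
  have hnonempty : Nonempty ↥(J ∩ J') := ⟨⟨w0, hw0⟩⟩
  rw [connected_iff] at hdisc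
  push_neg at hdisc
  have hnp : ¬ (G.induce (J ∩ J')).Preconnected := fun h => @IsEmpty.false _ (hdisc h) hnonempty.some
  unfold SimpleGraph.Preconnected at hnp
  push_neg at hnp
  obtain ⟨u, v, huv⟩ := hnp
  -- Bad pairs
  set Bad : V → V → Prop := fun x y => ∃ (hx : x ∈ J ∩ J') (hy : y ∈ J ∩ J'),
    ¬ (G.induce (J ∩ J')).Reachable ⟨x, hx⟩ ⟨y, hy⟩ with hBad
  have hBadW : Bad u.val v.val := ⟨u.2, v.2, huv⟩
  -- membership and adjacency of walks in induced subgraphs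
  have key : ∀ (S : Set V) (x y : ↥S), (G.induce S).Reachable x y →
      ∃ (n : ℕ) (f : ℕ → V), (∀ i ≤ n, f i ∈ S) ∧ (∀ i < n, G.Adj (f i) (f (i+1))) ∧
        f 0 = x.val ∧ f n = y.val := by
    intro S x y hr
    obtain ⟨w⟩ := hr
    refine ⟨w.length, fun i => (w.getVert i).val, fun i _ => (w.getVert i).2, ?_, ?_, ?_⟩
    · intro i hi
      exact w.adj_getVert_succ hi
    · show (w.getVert 0).val = x.val
      rw [SimpleGraph.Walk.getVert_zero]
    · show (w.getVert w.length).val = y.val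
      rw [SimpleGraph.Walk.getVert_length]
  -- First minimization: shortest J-walk between a bad pair
  set P₁ : ℕ → Prop := fun n => ∃ f : ℕ → V, (∀ i ≤ n, f i ∈ J) ∧
    (∀ i < n, G.Adj (f i) (f (i+1))) ∧ Bad (f 0) (f n) with hP₁def
  have hP₁ : ∃ n, P₁ n := by
    obtain ⟨n, f, hmem, hadj, h0, hn⟩ := key J ⟨u.val, u.2.1⟩ ⟨v.val, v.2.1⟩
      (hJ.preconnected _ _)
    exact ⟨n, f, hmem, hadj, by rw [h0, hn]; exact hBadW⟩
  set n₁ := Nat.find hP₁ with hn₁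
  obtain ⟨f, hfJ, hfadj, hfbad⟩ := Nat.find_spec hP₁
  obtain ⟨ha, hb, hnr⟩ := hfbad
  have hmin₁ : ∀ n' < n₁, ¬ P₁ n' := fun n' h => Nat.find_min hP₁ h
  -- injectivity
  have finj : ∀ i ≤ n₁, ∀ j ≤ n₁, f i = f j → i = j := by
    have haux : ∀ i j, i < j → j ≤ n₁ → f i ≠ f j := by
      intro i j hij hj heq
      obtain ⟨f', hmem', hadj', h0', hn'⟩ := splice (G := G) hij hj heq hfJ hfadj
      refine hmin₁ (i + (n₁ - j)) (by omega) ⟨f', hmem', hadj', ?_⟩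
      rw [h0', hn']
      exact ⟨ha, hb, hnr⟩
    intro i hi j hj heq
    rcases Nat.lt_trichotomy i j with h | h | h
    · exact absurd heq (haux i j h hj)
    · exact h
    · exact absurd heq.symm (haux j i h hi)
  -- internal vertices avoid J'
  have hint : ∀ i, 0 < i → i < n₁ → f i ∉ J' := by
    intro i h0i hi hmem
    have hz : f i ∈ J ∩ J' := ⟨hfJ i (le_of_lt hi), hmem⟩
    by_cases hr : (G.induce (J ∩ J')).Reachable ⟨f 0, ha⟩ ⟨f i, hz⟩
    · have hr2 : ¬ (G.induce (J ∩ J')).Reachable ⟨f i, hz⟩ ⟨f n₁, hb⟩ :=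
        fun h => hnr (hr.trans h)
      refine hmin₁ (n₁ - i) (by omega) ⟨fun t => f (t + i), ?_, ?_, ?_⟩
      · intro t ht; exact hfJ (t + i) (by omega)
      · intro t ht
        show G.Adj (f (t + i)) (f (t + 1 + i))
        have he : t + 1 + i = (t + i) + 1 := by omega
        rw [he]
        exact hfadj (t + i) (by omega)
      · have he : n₁ - i + i = n₁ := by omega
        simp only [Nat.zero_add, he]
        exact ⟨hz, hb, hr2⟩
    · exact hmin₁ i hi ⟨f, fun t ht => hfJ t (by omega), fun t ht => hfadj t (by omega),
        ha, hz, hr⟩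
  have hnadj : ¬ G.Adj (f 0) (f n₁) := by
    intro h
    exact hnr (SimpleGraph.Adj.reachable
      (by exact h : (G.induce (J ∩ J')).Adj ⟨f 0, ha⟩ ⟨f n₁, hb⟩))
  have hne0 : f 0 ≠ f n₁ := by
    intro h
    have he : (⟨f 0, ha⟩ : ↥(J ∩ J')) = ⟨f n₁, hb⟩ := Subtype.ext h
    exact hnr (he ▸ SimpleGraph.Reachable.refl _)
  -- Second minimization: shortest J'-walk from f 0 to f n₁
  set P₂ : ℕ → Prop := fun n => ∃ g : ℕ → V, (∀ i ≤ n, g i ∈ J') ∧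
    (∀ i < n, G.Adj (g i) (g (i+1))) ∧ g 0 = f 0 ∧ g n = f n₁ with hP₂def
  have hP₂ : ∃ n, P₂ n := by
    obtain ⟨n, g, hmem, hadj, h0, hn⟩ := key J' ⟨f 0, ha.2⟩ ⟨f n₁, hb.2⟩
      (hJ'.preconnected _ _)
    exact ⟨n, g, hmem, hadj, h0, hn⟩
  set n₂ := Nat.find hP₂ with hn₂
  obtain ⟨g, hgJ', hgadj, hg0, hgn⟩ := Nat.find_spec hP₂
  have hmin₂ : ∀ n' < n₂, ¬ P₂ n' := fun n' h => Nat.find_min hP₂ h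
  have ginj : ∀ i ≤ n₂, ∀ j ≤ n₂, g i = g j → i = j := by
    have haux : ∀ i j, i < j → j ≤ n₂ → g i ≠ g j := by
      intro i j hij hj heq
      obtain ⟨g', hmem', hadj', h0', hn'⟩ := splice (G := G) hij hj heq hgJ' hgadj
      exact hmin₂ (i + (n₂ - j)) (by omega) ⟨g', hmem', hadj', by rw [h0', hg0],
        by rw [hn', hgn]⟩
    intro i hi j hj heq
    rcases Nat.lt_trichotomy i j with h | h | h
    · exact absurd heq (haux i j h hj)
    · exact h
    · exact absurd heq.symm (haux j i h hi)
  have hcfg : Config G n₁ n₂ f g := by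
    constructor
    · exact hfadj
    · exact hgadj
    · exact finj
    · exact ginj
    · exact hg0.symm
    · exact hgn.symm
    · exact hnadj
    · exact hne0
    · intro i j h1 h2 h3 h4 heq
      exact hint i h1 h2 (heq ▸ hgJ' j (by omega))
  exact Config.concl (n₁ + n₂) n₁ n₂ f g le_rfl hcfg
end

section
/- Let G be a finite simple graph on vertex set {1, …, n}, and for each connected vertex subset I (i.e., I nonempty with G|_I connected) let e_I = Σ_{i∈I} e_i ∈ ℤ^n, and for each i let e_{ī} = −e_i, where e_1, …, e_n is the standard basis. Suppose N is a collection of such labels that is pairwise 'compatible' in the following sense: for I, J connected subsets, they are compatible iff I ⊆ J or J ⊆ I or G|_{I∪J} is disconnected; a connected subset I and a barred label ī are compatible iff i ∉ I; and any two barred labels are compatible. If N is pairwise compatible and |N| = n, then the vectors {e_I : I ∈ N} form a ℤ-basis of ℤ^n. -/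
open SimpleGraph

noncomputable def cubeVec (n : ℕ) : Set (Fin n) ⊕ Fin n → (Fin n → ℤ) :=
  Sum.elim (fun I => I.indicator 1) (fun i => -(({i} : Set (Fin n)).indicator 1))

def cubeCompat {n : ℕ} (G : SimpleGraph (Fin n)) :
    (Set (Fin n) ⊕ Fin n) → (Set (Fin n) ⊕ Fin n) → Prop
  | .inl I, .inl J => I ⊆ J ∨ J ⊆ I ∨ ¬ (G.induce (I ∪ J)).Connected
  | .inl I, .inr i => i ∉ I
  | .inr i, .inl I => i ∉ I
  | .inr _, .inr _ => True

private lemma cube_sep {n : ℕ} {G : SimpleGraph (Fin n)} {I J : Set (Fin n)}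
    (hIc : (G.induce I).Connected) (hJc : (G.induce J).Connected)
    (hnc : ¬ (G.induce (I ∪ J)).Connected) {a b : Fin n} (ha : a ∈ I) (hb : b ∈ J) :
    a ≠ b ∧ ¬ G.Adj a b := by
  constructor
  · rintro rfl
    exact hnc (induce_union_connected hIc.preconnected hJc.preconnected ⟨a, ha, hb⟩)
  · intro hadj
    exact hnc (connected_induce_union hIc.preconnected hJc.preconnected ha hb hadj)

private lemma cube_rep {n : ℕ} {G : SimpleGraph (Fin n)} {L : Set (Set (Fin n))}
    (hLfin : L.Finite)
    (hmem : ∀ I ∈ L, I.Nonempty ∧ (G.induce I).Connected)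
    (hcomp : ∀ I ∈ L, ∀ J ∈ L, I ⊆ J ∨ J ⊆ I ∨ ¬(G.induce (I ∪ J)).Connected)
    {I : Set (Fin n)} (hI : I ∈ L) :
    ∃ x ∈ I, ∀ J ∈ L, J ⊂ I → x ∉ J := by
  classical
  by_contra hcon
  push_neg at hcon
  set M : Set (Set (Fin n)) := {J | J ∈ L ∧ J ⊂ I} with hM
  have hMfin : M.Finite := hLfin.subset (fun J hJ => hJ.1)
  have hcover : ∀ x ∈ I, ∃ K, Maximal (· ∈ M) K ∧ x ∈ K := by
    intro x hx
    obtain ⟨J, hJL, hJI, hxJ⟩ := hcon x hx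
    obtain ⟨K, hJK, hKmax⟩ := hMfin.exists_le_maximal (⟨hJL, hJI⟩ : J ∈ M)
    exact ⟨K, hKmax, hJK hxJ⟩
  have hmaxsep : ∀ {K K'}, Maximal (· ∈ M) K → Maximal (· ∈ M) K' → K ≠ K' →
      ∀ a ∈ K, ∀ b ∈ K', a ≠ b ∧ ¬ G.Adj a b := by
    intro K K' hK hK' hne a ha b hb
    have hKL : K ∈ L := hK.prop.1
    have hK'L : K' ∈ L := hK'.prop.1
    have hnests : ¬ K ⊆ K' ∧ ¬ K' ⊆ K := by
      constructor
      · intro hsub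
        exact hne (le_antisymm hsub (hK.le_of_ge hK'.prop hsub))
      · intro hsub
        exact hne (le_antisymm hsub (hK'.le_of_ge hK.prop hsub)).symm
    have hnc : ¬ (G.induce (K ∪ K')).Connected := by
      rcases hcomp K hKL K' hK'L with h | h | h
      · exact absurd h hnests.1
      · exact absurd h hnests.2
      · exact h
    exact cube_sep (hmem K hKL).2 (hmem K' hK'L).2 hnc ha hb
  obtain ⟨x0, hx0⟩ := (hmem I hI).1
  obtain ⟨K0, hK0max, hxK0⟩ := hcover x0 hx0
  obtain ⟨y, hyI, hyK0⟩ := Set.exists_of_ssubset hK0max.prop.2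
  have hIconn := (hmem I hI).2
  obtain ⟨p⟩ := hIconn.preconnected ⟨x0, hx0⟩ ⟨y, hyI⟩
  obtain ⟨d, _, hdf, hds⟩ := p.exists_boundary_dart {v : ↥I | v.1 ∈ K0} hxK0 hyK0
  have hadj : G.Adj d.fst.1 d.snd.1 := d.adj
  obtain ⟨K1, hK1max, hbK1⟩ := hcover d.snd.1 d.snd.2
  have hne : K0 ≠ K1 := fun h => hds (h ▸ hbK1)
  exact (hmaxsep hK0max hK1max hne _ hdf _ hbK1).2 hadj

private lemma cube_indicator_sum {n : ℕ} (I : Set (Fin n)) :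
    (I.indicator 1 : Fin n → ℤ) = ∑ w ∈ I.toFinite.toFinset, Pi.single w 1 := by
  classical
  funext j
  simp only [Finset.sum_apply, Pi.single_apply, Set.indicator_apply, Set.Finite.mem_toFinset,
    Finset.sum_ite_eq, Pi.one_apply]

private lemma cube_single_eq {n : ℕ} (i : Fin n) :
    (({i} : Set (Fin n)).indicator 1 : Fin n → ℤ) = Pi.single i 1 := by
  funext j
  simp [Set.indicator_apply, Pi.single_apply]

theorem stmt9 {n : ℕ} (G : SimpleGraph (Fin n)) (N : Set (Set (Fin n) ⊕ Fin n))
    (hconn : ∀ I : Set (Fin n), Sum.inl I ∈ N → I.Nonempty ∧ (G.induce I).Connected)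
    (hcompat : ∀ l ∈ N, ∀ l' ∈ N, cubeCompat G l l')
    (hfin : N.Finite) (hcard : Nat.card N = n) :
    ∃ b : Module.Basis N ℤ (Fin n → ℤ), ∀ l : N, b l = cubeVec n l.val := by
  classical
  set L : Set (Set (Fin n)) := Sum.inl ⁻¹' N with hLdef
  set B : Set (Fin n) := Sum.inr ⁻¹' N with hBdef
  have hLfin : L.Finite := hfin.preimage Sum.inl_injective.injOn
  have hBfin : B.Finite := hfin.preimage Sum.inr_injective.injOn
  have hmem : ∀ I ∈ L, I.Nonempty ∧ (G.induce I).Connected := fun I hI => hconn I hI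
  have hcomp : ∀ I ∈ L, ∀ J ∈ L, I ⊆ J ∨ J ⊆ I ∨ ¬(G.induce (I ∪ J)).Connected :=
    fun I hI J hJ => hcompat _ hI _ hJ
  have hBL : ∀ {i : Fin n} {I : Set (Fin n)}, i ∈ B → I ∈ L → i ∉ I :=
    fun {i I} hi hI => hcompat _ hi _ hI
  -- choose a representative point for each member of L
  have hrep := fun (I : ↥L) => cube_rep hLfin hmem hcomp I.2
  choose ψ hψmem hψmin using hrep
  -- ψ is injective
  have hψinj : Function.Injective ψ := by
    intro I J hIJ
    by_contra hne
    have hne' : (I : Set (Fin n)) ≠ (J : Set (Fin n)) := fun h => hne (Subtype.ext h)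
    have hnested : (I : Set (Fin n)) ⊆ J ∨ (J : Set (Fin n)) ⊆ I := by
      rcases hcomp I I.2 J J.2 with h | h | h
      · exact Or.inl h
      · exact Or.inr h
      · exact absurd rfl
          (cube_sep (hmem _ I.2).2 (hmem _ J.2).2 h (hψmem I) (hIJ ▸ hψmem J)).1
    rcases hnested with h | h
    · exact hψmin J _ I.2 (ssubset_of_subset_of_ne h hne') (hIJ ▸ hψmem I)
    · exact hψmin I _ J.2 (ssubset_of_subset_of_ne h hne'.symm) (hIJ.symm ▸ hψmem J)
  -- counting
  have hNdecomp : N = Sum.inl '' L ∪ Sum.inr '' B := by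
    ext l
    cases l with
    | inl I => simp [hLdef]
    | inr i => simp [hBdef]
  have hcardsum : L.ncard + B.ncard = n := by
    have hc := hcard
    rw [Nat.card_coe_set_eq, hNdecomp,
      Set.ncard_union_eq ?disj (hLfin.image _) (hBfin.image _),
      Set.ncard_image_of_injective _ Sum.inl_injective,
      Set.ncard_image_of_injective _ Sum.inr_injective] at hc
    · exact hc
    case disj =>
      rw [Set.disjoint_left]
      rintro _ ⟨I, hI, rfl⟩ ⟨i, hi, h⟩
      simp at h
  have hψB : Set.range ψ ⊆ Bᶜ := by
    rintro _ ⟨I, rfl⟩ hmemB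
    exact hBL hmemB I.2 (hψmem I)
  have hrange : Set.range ψ = Bᶜ := by
    apply Set.eq_of_subset_of_ncard_le hψB ?_ (Set.toFinite _)
    have h1 : (Set.range ψ).ncard = L.ncard := by
      rw [← Nat.card_coe_set_eq, Nat.card_range_of_injective hψinj, Nat.card_coe_set_eq]
    have h2 : B.ncard + Bᶜ.ncard = n := by
      have h3 := Set.ncard_add_ncard_compl B
      simpa using h3
    omega
  -- the span
  set v : ↥N → (Fin n → ℤ) := fun l => cubeVec n l.1 with hv
  set W := Submodule.span ℤ (Set.range v) with hW
  have hIW : ∀ I ∈ L, (I.indicator 1 : Fin n → ℤ) ∈ W := by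
    intro I hI
    exact Submodule.subset_span ⟨⟨Sum.inl I, hI⟩, rfl⟩
  have hBW : ∀ i ∈ B, (Pi.single i 1 : Fin n → ℤ) ∈ W := by
    intro i hi
    have h : (Pi.single i 1 : Fin n → ℤ) = -(cubeVec n (Sum.inr i)) := by
      simp [cubeVec, cube_single_eq i]
    rw [h]
    exact neg_mem (Submodule.subset_span ⟨⟨Sum.inr i, hi⟩, rfl⟩)
  have key : ∀ m : ℕ, ∀ I : ↥L, (I : Set (Fin n)).ncard ≤ m →
      (Pi.single (ψ I) 1 : Fin n → ℤ) ∈ W := by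
    intro m
    induction m with
    | zero =>
      intro I h0
      have hz : (I : Set (Fin n)).ncard = 0 := Nat.le_zero.1 h0
      rw [Set.ncard_eq_zero (Set.toFinite _)] at hz
      exact absurd hz (hmem _ I.2).1.ne_empty
    | succ m ih =>
      intro I hm
      have hmemF : ψ I ∈ (I : Set (Fin n)).toFinite.toFinset :=
        (Set.Finite.mem_toFinset _).2 (hψmem I)
      have hsum := cube_indicator_sum (I : Set (Fin n))
      rw [← Finset.add_sum_erase _ _ hmemF] at hsum
      have hre : (Pi.single (ψ I) 1 : Fin n → ℤ)
          = (I : Set (Fin n)).indicator 1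
            - ∑ w ∈ ((I : Set (Fin n)).toFinite.toFinset.erase (ψ I)), Pi.single w 1 := by
        rw [hsum]; abel
      rw [hre]
      refine sub_mem (hIW _ I.2) (Submodule.sum_mem _ ?_)
      intro w hw
      obtain ⟨hwne, hwmem⟩ := Finset.mem_erase.1 hw
      have hwI : w ∈ (I : Set (Fin n)) := (Set.Finite.mem_toFinset _).1 hwmem
      have hwB : w ∉ B := fun hB => hBL hB I.2 hwI
      have hwr : w ∈ Set.range ψ := hrange ▸ hwB
      obtain ⟨J, rfl⟩ := hwr
      have hJI : (J : Set (Fin n)) ⊂ I := by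
        have hne' : (J : Set (Fin n)) ≠ (I : Set (Fin n)) := by
          intro h
          exact hwne (congrArg ψ (Subtype.ext h))
        have hnested : (J : Set (Fin n)) ⊆ I ∨ (I : Set (Fin n)) ⊆ J := by
          rcases hcomp J J.2 I I.2 with h | h | h
          · exact Or.inl h
          · exact Or.inr h
          · exact absurd rfl
              (cube_sep (hmem _ J.2).2 (hmem _ I.2).2 h (hψmem J) hwI).1
        rcases hnested with h | h
        · exact ssubset_of_subset_of_ne h hne'
        · exact (hψmin J _ I.2 (ssubset_of_subset_of_ne h hne'.symm) hwI).elim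
      have hcardlt : (J : Set (Fin n)).ncard < (I : Set (Fin n)).ncard :=
        Set.ncard_lt_ncard hJI (Set.toFinite _)
      exact ih J (by omega)
  have hsingleW : ∀ i : Fin n, (Pi.single i 1 : Fin n → ℤ) ∈ W := by
    intro i
    by_cases hi : i ∈ B
    · exact hBW i hi
    · have hir : i ∈ Set.range ψ := hrange ▸ hi
      obtain ⟨I, rfl⟩ := hir
      refine key n I ?_
      have := Set.ncard_le_ncard (Set.subset_univ (I : Set (Fin n))) (Set.toFinite _)
      simpa [Set.ncard_univ] using this
  have hspan : Submodule.span ℤ (Set.range v) = ⊤ := by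
    rw [← hW, eq_top_iff]
    intro x _
    have hx : x = ∑ i : Fin n, x i • Pi.single i 1 := by
      funext j
      simp [Finset.sum_apply, Pi.single_apply]
    rw [hx]
    exact Submodule.sum_mem _ fun i _ => Submodule.smul_mem _ _ (hsingleW i)
  -- linear independence via Orzech
  haveI : Fintype ↥N := hfin.fintype
  have hcardN : Fintype.card ↥N = n := by rw [← Nat.card_eq_fintype_card]; exact hcard
  let eN : ↥N ≃ Fin n := Fintype.equivFinOfCardEq hcardN
  let e : (↥N →₀ ℤ) ≃ₗ[ℤ] (Fin n → ℤ) :=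
    (Finsupp.domLCongr eN).trans (Finsupp.linearEquivFunOnFinite ℤ ℤ (Fin n))
  have hTsurj : Function.Surjective (Finsupp.linearCombination ℤ v) := by
    rw [← LinearMap.range_eq_top, Finsupp.range_linearCombination, hspan]
  have hg : Function.Surjective ((Finsupp.linearCombination ℤ v) ∘ₗ e.symm.toLinearMap) :=
    hTsurj.comp e.symm.surjective
  have hginj := OrzechProperty.injective_of_surjective_endomorphism _ hg
  have hTinj : Function.Injective (Finsupp.linearCombination ℤ v) := by
    intro a b hab
    have h : ((Finsupp.linearCombination ℤ v) ∘ₗ e.symm.toLinearMap) (e a)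
        = ((Finsupp.linearCombination ℤ v) ∘ₗ e.symm.toLinearMap) (e b) := by
      simp [hab]
    exact e.injective (hginj h)
  have hli : LinearIndependent ℤ v := linearIndependent_iff_injective_finsuppLinearCombination.mpr hTinj
  exact ⟨Module.Basis.mk hli hspan.ge, fun l => Module.Basis.mk_apply _ _ _⟩
end

section
/- Let G be a finite simple graph with no induced subgraph isomorphic to a cycle with ≥ 4 vertices, no induced diamond, and no induced claw. Then for any two vertex subsets J, J' with G|_J, G|_{J'} and G|_{J∪J'} connected and J ∩ J' ≠ ∅, the induced subgraph G|_{J ∩ J'} is connected. -/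
open SimpleGraph

def clawGraph : SimpleGraph (Fin 4) := SimpleGraph.fromEdgeSet {s(0,1), s(0,2), s(0,3)}

lemma diamond_absurd {V : Type*} (G : SimpleGraph V)
    (hdia : ∀ I : Set V, ¬ Nonempty (G.induce I ≃g diamondGraph))
    (a b c d : V)
    (hab : G.Adj a b) (hac : G.Adj a c) (had : G.Adj a d)
    (hbc : G.Adj b c) (hbd : G.Adj b d) (hcd : ¬ G.Adj c d) (hne : c ≠ d) : False := by
  set I : Set V := {a, b, c, d} with hI
  have ha : a ∈ I := by simp [hI]
  have hb : b ∈ I := by simp [hI]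
  have hc : c ∈ I := by simp [hI]
  have hd : d ∈ I := by simp [hI]
  let g : Fin 4 → ↥I := ![⟨a, ha⟩, ⟨b, hb⟩, ⟨c, hc⟩, ⟨d, hd⟩]
  have hinj : Function.Injective g := by
    have h1 : a ≠ b := hab.ne
    have h2 : a ≠ c := hac.ne
    have h3 : a ≠ d := had.ne
    have h4 : b ≠ c := hbc.ne
    have h5 : b ≠ d := hbd.ne
    intro x y hxy
    fin_cases x <;> fin_cases y <;> simp_all [g] <;> simp_all [Subtype.ext_iff]
  have hsurj : Function.Surjective g := by
    rintro ⟨v, hv⟩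
    rw [hI] at hv
    rcases hv with h | h | h | h
    · exact ⟨0, by simp [g, h]⟩
    · exact ⟨1, by simp [g, h]⟩
    · exact ⟨2, by simp [g, h]⟩
    · rw [Set.mem_singleton_iff] at h
      exact ⟨3, by simp [g, h]⟩
  refine hdia I ⟨(SimpleGraph.Iso.symm ⟨Equiv.ofBijective g ⟨hinj, hsurj⟩, ?_⟩)⟩
  intro x y
  have hadj : G.Adj b a := hab.symm
  have hadj2 : G.Adj c a := hac.symm
  have hadj3 : G.Adj d a := had.symm
  have hadj4 : G.Adj c b := hbc.symm
  have hadj5 : G.Adj d b := hbd.symm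
  have hdc : ¬ G.Adj d c := fun h => hcd h.symm
  fin_cases x <;> fin_cases y <;>
    simp_all [g, diamondGraph, Equiv.ofBijective, completeGraph, Sym2.eq, Sym2.rel_iff'] <;>
    first | exact fun h => G.loopless _ h | decide | rfl

lemma mod_helper (L i j : ℕ) (hL : 2 ≤ L) (hi : i < L) (hj : j < L) :
    (i + (L - j)) % L = 1 ↔ (i = j + 1 ∨ (i = 0 ∧ j = L - 1)) := by
  rcases Nat.lt_or_ge (i + (L - j)) L with h | h
  · rw [Nat.mod_eq_of_lt h]; omega
  · have h2 : i + (L - j) - L < L := by omega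
    rw [Nat.mod_eq_sub_mod h, Nat.mod_eq_of_lt h2]; omega

lemma cycle_absurd {V : Type*} (G : SimpleGraph V)
    (hcyc : ∀ I : Set V, ∀ k : ℕ, 4 ≤ k → ¬ Nonempty (G.induce I ≃g cycleGraph k))
    (L : ℕ) (hL : 4 ≤ L) (f : ℕ → V)
    (hinj : ∀ i j, i < L → j < L → f i = f j → i = j)
    (hadj : ∀ i j, i < L → j < L →
      (G.Adj (f i) (f j) ↔ (j = i + 1 ∨ i = j + 1 ∨ (i = 0 ∧ j = L - 1) ∨ (j = 0 ∧ i = L - 1)))) :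
    False := by
  set I : Set V := {v | ∃ i, i < L ∧ f i = v} with hI
  let g : Fin L → ↥I := fun x => ⟨f x.val, ⟨x.val, x.isLt, rfl⟩⟩
  have hinj' : Function.Injective g := by
    intro x y hxy
    exact Fin.ext (hinj _ _ x.isLt y.isLt (by simpa [g, Subtype.ext_iff] using hxy))
  have hsurj : Function.Surjective g := by
    rintro ⟨v, i, hiL, rfl⟩
    exact ⟨⟨i, hiL⟩, rfl⟩
  refine hcyc I L hL ⟨(SimpleGraph.Iso.symm ⟨Equiv.ofBijective g ⟨hinj', hsurj⟩, ?_⟩)⟩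
  intro x y
  have hx := x.isLt
  have hy := y.isLt
  have hsub : ∀ a b : Fin L, (a - b).val = (a.val + (L - b.val)) % L := by
    intro a b; rw [Fin.sub_def]; simp [Nat.add_comm]
  have key : (G.induce I).Adj (g x) (g y) ↔ G.Adj (f x.val) (f y.val) := by
    simp [g, comap_adj]
  change (G.induce I).Adj (g x) (g y) ↔ _
  rw [key, hadj _ _ hx hy,
    cycleGraph_adj', hsub, hsub, mod_helper L _ _ (by omega) hx hy,
    mod_helper L _ _ (by omega) hy hx]
  omega

section Chains
variable {V : Type*} (G : SimpleGraph V)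

def GChain (G : SimpleGraph V) (S : Set V) (c : ℕ → V) (n : ℕ) : Prop :=
  (∀ t, t ≤ n → c t ∈ S) ∧ (∀ t, t < n → G.Adj (c t) (c (t + 1)))

lemma gchain_of_reachable {S : Set V} {x y : ↥S} (h : (G.induce S).Reachable x y) :
    ∃ n c, GChain G S c n ∧ c 0 = ↑x ∧ c n = ↑y := by
  obtain ⟨w⟩ := h
  refine ⟨w.length, fun t => ↑(w.getVert t), ⟨fun t _ => (w.getVert t).2, fun t ht => ?_⟩,
    by simp, by simp⟩
  exact w.adj_getVert_succ ht

lemma gchain_shift {S : Set V} {c : ℕ → V} {n i : ℕ} (h : GChain G S c n) (hi : i ≤ n) :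
    ∃ c', GChain G S c' (n - i) ∧ c' 0 = c i ∧ c' (n - i) = c n := by
  refine ⟨fun t => c (i + t), ⟨fun t ht => h.1 _ (by omega), fun t ht => ?_⟩, by simp,
    by show c (i + (n - i)) = c n; congr 1; omega⟩
  show G.Adj (c (i + t)) (c (i + (t + 1)))
  have he : i + (t + 1) = (i + t) + 1 := by omega
  rw [he]
  exact h.2 _ (by omega)

lemma gchain_trunc {S : Set V} {c : ℕ → V} {n i : ℕ} (h : GChain G S c n) (hi : i ≤ n) :
    GChain G S c i :=
  ⟨fun t ht => h.1 _ (by omega), fun t ht => h.2 _ (by omega)⟩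

lemma gchain_splice {S : Set V} {c : ℕ → V} {n i D : ℕ} (h : GChain G S c n)
    (hD : i + 1 + D ≤ n) (hstep : G.Adj (c i) (c (i + 1 + D))) :
    ∃ c', GChain G S c' (n - D) ∧ c' 0 = c 0 ∧ c' (n - D) = c n := by
  refine ⟨fun t => if t ≤ i then c t else c (t + D), ⟨fun t ht => ?_, fun t ht => ?_⟩, ?_, ?_⟩
  · show (if t ≤ i then c t else c (t + D)) ∈ S
    by_cases htt : t ≤ i
    · rw [if_pos htt]; exact h.1 _ (by omega)
    · rw [if_neg htt]; exact h.1 _ (by omega)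
  · show G.Adj (if t ≤ i then c t else c (t + D)) (if t + 1 ≤ i then c (t + 1) else c (t + 1 + D))
    rcases lt_trichotomy t i with h1 | h1 | h1
    · rw [if_pos (by omega), if_pos (by omega)]; exact h.2 _ (by omega)
    · subst h1
      rw [if_pos le_rfl, if_neg (by omega)]
      exact hstep
    · rw [if_neg (by omega), if_neg (by omega)]
      have he : t + 1 + D = (t + D) + 1 := by omega
      rw [he]
      exact h.2 _ (by omega)
  · show (if 0 ≤ i then c 0 else c (0 + D)) = c 0
    rw [if_pos (by omega)]
  · show (if n - D ≤ i then c (n - D) else c (n - D + D)) = c n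
    rw [if_neg (by omega)]
    congr 1
    omega

end Chains

open Classical in
lemma nat_min_spec {P : ℕ → Prop} (h : ∃ n, P n) : ∃ n, P n ∧ ∀ b, b < n → ¬ P b :=
  ⟨Nat.find h, Nat.find_spec h, fun b hb => Nat.find_min h hb⟩

lemma lemmaA {V : Type*} (G : SimpleGraph V)
    (hcyc : ∀ I : Set V, ∀ k : ℕ, 4 ≤ k → ¬ Nonempty (G.induce I ≃g cycleGraph k))
    (hdia : ∀ I : Set V, ¬ Nonempty (G.induce I ≃g diamondGraph))
    {p q : ℕ → V} {k m : ℕ} (hk : 2 ≤ k) (hm : 2 ≤ m)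
    (hpadj : ∀ t, t < k → G.Adj (p t) (p (t + 1)))
    (hqadj : ∀ t, t < m → G.Adj (q t) (q (t + 1)))
    (hpinj : ∀ i j, i ≤ k → j ≤ k → p i = p j → i = j)
    (hqinj : ∀ i j, i ≤ m → j ≤ m → q i = q j → i = j)
    (hpind : ∀ i j, i + 2 ≤ j → j ≤ k → ¬ G.Adj (p i) (p j))
    (hqind : ∀ i j, i + 2 ≤ j → j ≤ m → ¬ G.Adj (q i) (q j))
    (hpq0 : p 0 = q 0) (hpqk : p k = q m)
    (hdisj : ∀ i j, 0 < i → i < k → j ≤ m → p i ≠ q j)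
    (hends : ¬ G.Adj (p 0) (p k)) : False := by
  have pchar : ∀ i j, i ≤ k → j ≤ k → (G.Adj (p i) (p j) ↔ (j = i + 1 ∨ i = j + 1)) := by
    intro i j hi hj
    constructor
    · intro h
      by_contra hcon
      push_neg at hcon
      rcases lt_trichotomy i j with hij | rfl | hij
      · exact hpind i j (by omega) hj h
      · exact G.loopless.irrefl _ h
      · exact hpind j i (by omega) hi h.symm
    · rintro (rfl | rfl)
      · exact hpadj i (by omega)
      · exact (hpadj j (by omega)).symm
  have qchar : ∀ i j, i ≤ m → j ≤ m → (G.Adj (q i) (q j) ↔ (j = i + 1 ∨ i = j + 1)) := by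
    intro i j hi hj
    constructor
    · intro h
      by_contra hcon
      push_neg at hcon
      rcases lt_trichotomy i j with hij | rfl | hij
      · exact hqind i j (by omega) hj h
      · exact G.loopless.irrefl _ h
      · exact hqind j i (by omega) hi h.symm
    · rintro (rfl | rfl)
      · exact hqadj i (by omega)
      · exact (hqadj j (by omega)).symm
  -- CYC1 : cycle p 0, p 1, ..., p A, q B, q (B-1), ..., q 1, (p 0)
  have CYC1 : ∀ A B, 1 ≤ A → A ≤ k → 1 ≤ B → B ≤ m - 1 → G.Adj (p A) (q B) →
      (∀ s t, 1 ≤ s → s ≤ k - 1 → 1 ≤ t → t ≤ m - 1 →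
        (s < A ∨ (s = A ∧ t < B)) → ¬ G.Adj (p s) (q t)) →
      A + B ≤ 2 := by
    intro A B hA1 hAk hB1 hBm hchord hmin
    by_contra hcon
    push_neg at hcon
    have hBval : A = k → B = m - 1 := by
      intro hAk'
      have h2 := hchord
      rw [hAk', hpqk] at h2
      have := (qchar m B le_rfl (by omega)).mp h2
      omega
    have cross : ∀ t s, t ≤ A → A < s → s ≤ A + B → p t ≠ q (A + B + 1 - s) := by
      intro t s htA hAs hsL heq
      by_cases ht0 : t = 0
      · subst ht0
        rw [hpq0] at heq
        have := hqinj 0 (A + B + 1 - s) (by omega) (by omega) heq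
        omega
      · by_cases htk : t = k
        · subst htk
          rw [hpqk] at heq
          have := hqinj m (A + B + 1 - s) le_rfl (by omega) heq
          omega
        · exact hdisj t (A + B + 1 - s) (by omega) (by omega) (by omega) heq
    apply cycle_absurd G hcyc (A + B + 1) (by omega)
      (fun t => if t ≤ A then p t else q (A + B + 1 - t))
    · intro i j hi hj hij
      rcases le_or_gt i A with h1 | h1 <;> rcases le_or_gt j A with h2 | h2
      · rw [if_pos h1, if_pos h2] at hij
        exact hpinj i j (by omega) (by omega) hij
      · rw [if_pos h1, if_neg (by omega)] at hij
        exact absurd hij (cross i j h1 h2 (by omega))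
      · rw [if_neg (by omega), if_pos h2] at hij
        exact absurd hij.symm (cross j i h2 h1 (by omega))
      · rw [if_neg (by omega), if_neg (by omega)] at hij
        have := hqinj _ _ (show A + B + 1 - i ≤ m by omega) (show A + B + 1 - j ≤ m by omega) hij
        omega
    · have main : ∀ t s, t < A + B + 1 → s < A + B + 1 → t ≤ A → A < s →
          (G.Adj (p t) (q (A + B + 1 - s)) ↔ (s = t + 1 ∨ t = s + 1 ∨
            (t = 0 ∧ s = A + B + 1 - 1) ∨ (s = 0 ∧ t = A + B + 1 - 1))) := by
        intro t s ht hs htA hAs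
        by_cases ht0 : t = 0
        · subst ht0
          rw [hpq0, qchar 0 (A + B + 1 - s) (by omega) (by omega)]
          omega
        · by_cases htA' : t = A
          · by_cases hAk' : A = k
            · have hBm' := hBval hAk'
              have hval : p t = q m := by rw [htA', hAk', hpqk]
              rw [hval, qchar m (A + B + 1 - s) le_rfl (by omega)]
              omega
            · by_cases hs1 : s = A + 1
              · have hidx : A + B + 1 - s = B := by omega
                rw [hidx, htA']
                exact ⟨fun _ => by omega, fun _ => hchord⟩
              · have hnadj := hmin t (A + B + 1 - s) (by omega) (by omega) (by omega) (by omega)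
                  (Or.inr ⟨htA', by omega⟩)
                exact ⟨fun h => absurd h hnadj, fun h => by exfalso; omega⟩
          · have hnadj := hmin t (A + B + 1 - s) (by omega) (by omega) (by omega) (by omega)
              (Or.inl (by omega))
            exact ⟨fun h => absurd h hnadj, fun h => by exfalso; omega⟩
      intro i j hi hj
      rcases le_or_gt i A with h1 | h1 <;> rcases le_or_gt j A with h2 | h2
      · rw [if_pos h1, if_pos h2, pchar i j (by omega) (by omega)]
        omega
      · rw [if_pos h1, if_neg (by omega)]
        exact main i j hi hj h1 h2
      · rw [if_neg (by omega), if_pos h2, adj_comm, main j i hj hi h2 h1]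
        omega
      · rw [if_neg (by omega), if_neg (by omega),
          qchar (A + B + 1 - i) (A + B + 1 - j) (by omega) (by omega)]
        omega
  -- CYC2 : cycle p 1, p 2, ..., p A, q B, q (B-1), ..., q 1, (p 1), using edge p1-q1
  have CYC2 : ∀ A B, 1 ≤ A → A ≤ k → 1 ≤ B → B ≤ m - 1 → ¬(A = 1 ∧ B = 1) →
      G.Adj (p 1) (q 1) → G.Adj (p A) (q B) →
      (∀ s t, 1 ≤ s → s ≤ k - 1 → 1 ≤ t → t ≤ m - 1 → ¬(s = 1 ∧ t = 1) →
        (s < A ∨ (s = A ∧ t < B)) → ¬ G.Adj (p s) (q t)) →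
      A + B ≤ 3 := by
    intro A B hA1 hAk hB1 hBm hAB hq1p1 hchord hmin
    by_contra hcon
    push_neg at hcon
    have hBval : A = k → B = m - 1 := by
      intro hAk'
      have h2 := hchord
      rw [hAk', hpqk] at h2
      have := (qchar m B le_rfl (by omega)).mp h2
      omega
    have cross : ∀ t s, t ≤ A - 1 → A - 1 < s → s ≤ A + B - 1 → p (t + 1) ≠ q (A + B - s) := by
      intro t s htA hAs hsL heq
      by_cases htk : t + 1 = k
      · rw [htk, hpqk] at heq
        have := hqinj m (A + B - s) le_rfl (by omega) heq
        omega
      · exact hdisj (t + 1) (A + B - s) (by omega) (by omega) (by omega) heq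
    apply cycle_absurd G hcyc (A + B) (by omega)
      (fun t => if t ≤ A - 1 then p (t + 1) else q (A + B - t))
    · intro i j hi hj hij
      rcases le_or_gt i (A - 1) with h1 | h1 <;> rcases le_or_gt j (A - 1) with h2 | h2
      · rw [if_pos h1, if_pos h2] at hij
        have := hpinj (i + 1) (j + 1) (by omega) (by omega) hij
        omega
      · rw [if_pos h1, if_neg (by omega)] at hij
        exact absurd hij (cross i j h1 h2 (by omega))
      · rw [if_neg (by omega), if_pos h2] at hij
        exact absurd hij.symm (cross j i h2 h1 (by omega))
      · rw [if_neg (by omega), if_neg (by omega)] at hij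
        have := hqinj _ _ (show A + B - i ≤ m by omega) (show A + B - j ≤ m by omega) hij
        omega
    · have main : ∀ t s, t < A + B → s < A + B → t ≤ A - 1 → A - 1 < s →
          (G.Adj (p (t + 1)) (q (A + B - s)) ↔ (s = t + 1 ∨ t = s + 1 ∨
            (t = 0 ∧ s = A + B - 1) ∨ (s = 0 ∧ t = A + B - 1))) := by
        intro t s ht hs htA hAs
        by_cases hwrap : t = 0 ∧ s = A + B - 1
        · have hidx : A + B - s = 1 := by omega
          rw [hwrap.1, hidx]
          exact ⟨fun _ => by omega, fun _ => hq1p1⟩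
        · by_cases hcons : s = t + 1
          · -- then t = A - 1, the chord edge
            have hidx : A + B - s = B := by omega
            have hidx2 : t + 1 = A := by omega
            rw [hidx, hidx2]
            exact ⟨fun _ => by omega, fun _ => hchord⟩
          · -- neither wrap nor consecutive: not adjacent
            have hne : ¬ G.Adj (p (t + 1)) (q (A + B - s)) := by
              by_cases htA' : t + 1 = A
              · by_cases hAk' : A = k
                · have hBm' := hBval hAk'
                  have hval : p (t + 1) = q m := by rw [htA', hAk', hpqk]
                  rw [hval, qchar m (A + B - s) le_rfl (by omega)]
                  omega
                · exact hmin (t + 1) (A + B - s) (by omega) (by omega) (by omega) (by omega)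
                    (by omega) (Or.inr ⟨htA', by omega⟩)
              · exact hmin (t + 1) (A + B - s) (by omega) (by omega) (by omega) (by omega)
                  (by omega) (Or.inl (by omega))
            exact ⟨fun h => absurd h hne, fun h => by exfalso; omega⟩
      intro i j hi hj
      rcases le_or_gt i (A - 1) with h1 | h1 <;> rcases le_or_gt j (A - 1) with h2 | h2
      · rw [if_pos h1, if_pos h2, pchar (i + 1) (j + 1) (by omega) (by omega)]
        omega
      · rw [if_pos h1, if_neg (by omega)]
        exact main i j hi hj h1 h2
      · rw [if_neg (by omega), if_pos h2, adj_comm, main j i hj hi h2 h1]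
        omega
      · rw [if_neg (by omega), if_neg (by omega),
          qchar (A + B - i) (A + B - j) (by omega) (by omega)]
        omega
  have hchord0 : G.Adj (p k) (q (m - 1)) := by
    rw [hpqk]
    have h := hqadj (m - 1) (by omega)
    have he : m - 1 + 1 = m := by omega
    rw [he] at h
    exact h.symm
  -- Step 1 : some chord exists
  have S1 : ∃ i, 1 ≤ i ∧ i ≤ k - 1 ∧ ∃ j, 1 ≤ j ∧ j ≤ m - 1 ∧ G.Adj (p i) (q j) := by
    by_contra hno
    have hno2 : ∀ s t, 1 ≤ s → s ≤ k - 1 → 1 ≤ t → t ≤ m - 1 → ¬ G.Adj (p s) (q t) :=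
      fun s t h1 h2 h3 h4 h5 => hno ⟨s, h1, h2, t, h3, h4, h5⟩
    have := CYC1 k (m - 1) (by omega) le_rfl (by omega) le_rfl hchord0
      (fun s t hs1 hsk ht1 htm _ => hno2 s t hs1 hsk ht1 htm)
    omega
  obtain ⟨i1, ⟨hi11, hi1k, j1t, hj1t1, hj1tm, hadjt⟩, hi1min⟩ := nat_min_spec S1
  obtain ⟨j1, ⟨hj11, hj1m, hadj11⟩, hj1min⟩ :=
    nat_min_spec (⟨j1t, hj1t1, hj1tm, hadjt⟩ :
      ∃ j, 1 ≤ j ∧ j ≤ m - 1 ∧ G.Adj (p i1) (q j))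
  -- Step 2 : p 1 ~ q 1
  have hS2 : G.Adj (p 1) (q 1) := by
    have hmin1 : ∀ s t, 1 ≤ s → s ≤ k - 1 → 1 ≤ t → t ≤ m - 1 →
        (s < i1 ∨ (s = i1 ∧ t < j1)) → ¬ G.Adj (p s) (q t) := by
      intro s t hs1 hsk ht1 htm hlt hadj
      rcases hlt with h | ⟨hse, h⟩
      · exact hi1min s h ⟨hs1, hsk, t, ht1, htm, hadj⟩
      · subst hse
        exact hj1min t h ⟨ht1, htm, hadj⟩
    have h12 := CYC1 i1 j1 hi11 (by omega) hj11 hj1m hadj11 hmin1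
    have he : i1 = 1 ∧ j1 = 1 := by omega
    obtain ⟨he1, he2⟩ := he
    rw [he1, he2] at hadj11
    exact hadj11
  by_cases hk2 : k = 2 ∧ m = 2
  · -- diamond on p0, p1, q1, pk
    obtain ⟨hk2', hm2'⟩ := hk2
    refine diamond_absurd G hdia (p 1) (q 1) (p 0) (p k) hS2 (hpadj 0 (by omega)).symm
      ?_ ?_ ?_ hends ?_
    · rw [hk2']; exact hpadj 1 (by omega)
    · rw [hpq0]; exact (hqadj 0 (by omega)).symm
    · rw [hpqk, hm2']; exact hqadj 1 (by omega)
    · intro h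
      have := hpinj 0 k (by omega) le_rfl h
      omega
  · have hkm5 : 5 ≤ k + m := by omega
    by_cases hex : ∃ i, 1 ≤ i ∧ i ≤ k - 1 ∧ ∃ j, 1 ≤ j ∧ j ≤ m - 1 ∧ ¬(i = 1 ∧ j = 1) ∧
        G.Adj (p i) (q j)
    · obtain ⟨i0, ⟨hi01, hi0k, j0t, hj0t1, hj0tm, hj0ne, hadj0t⟩, hi0min⟩ := nat_min_spec hex
      obtain ⟨j0, ⟨hj01, hj0m, hj0ne', hadj00⟩, hj0min⟩ :=
        nat_min_spec (⟨j0t, hj0t1, hj0tm, hj0ne, hadj0t⟩ :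
          ∃ j, 1 ≤ j ∧ j ≤ m - 1 ∧ ¬(i0 = 1 ∧ j = 1) ∧ G.Adj (p i0) (q j))
      have hmin0 : ∀ s t, 1 ≤ s → s ≤ k - 1 → 1 ≤ t → t ≤ m - 1 → ¬(s = 1 ∧ t = 1) →
          (s < i0 ∨ (s = i0 ∧ t < j0)) → ¬ G.Adj (p s) (q t) := by
        intro s t hs1 hsk ht1 htm hne hlt hadj
        rcases hlt with h | ⟨hse, h⟩
        · exact hi0min s h ⟨hs1, hsk, t, ht1, htm, hne, hadj⟩
        · subst hse
          exact hj0min t h ⟨ht1, htm, hne, hadj⟩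
      have h3 := CYC2 i0 j0 hi01 (by omega) hj01 hj0m hj0ne' hS2 hadj00 hmin0
      by_cases hc : i0 = 1
      · -- (i0, j0) = (1, 2) : diamond on p0, p1, q1, q2
        have hj02 : j0 = 2 := by omega
        rw [hc, hj02] at hadj00
        refine diamond_absurd G hdia (p 1) (q 1) (p 0) (q 2) hS2 (hpadj 0 (by omega)).symm
          hadj00 ?_ ?_ ?_ ?_
        · rw [hpq0]; exact (hqadj 0 (by omega)).symm
        · exact hqadj 1 (by omega)
        · rw [hpq0]; exact hqind 0 2 (by omega) (by omega)
        · rw [hpq0]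
          intro h
          have := hqinj 0 2 (by omega) (by omega) h
          omega
      · -- (i0, j0) = (2, 1) : diamond on p0, p1, q1, p2
        have hi02 : i0 = 2 := by omega
        have hj01' : j0 = 1 := by omega
        rw [hi02, hj01'] at hadj00
        refine diamond_absurd G hdia (p 1) (q 1) (p 0) (p 2) hS2 (hpadj 0 (by omega)).symm
          (hpadj 1 (by omega)) ?_ hadj00.symm ?_ ?_
        · rw [hpq0]; exact (hqadj 0 (by omega)).symm
        · exact hpind 0 2 (by omega) (by omega)
        · intro h
          have := hpinj 0 2 (by omega) (by omega) h
          omega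
    · have hno2 : ∀ s t, 1 ≤ s → s ≤ k - 1 → 1 ≤ t → t ≤ m - 1 → ¬(s = 1 ∧ t = 1) →
          ¬ G.Adj (p s) (q t) :=
        fun s t h1 h2 h3 h4 h5 h6 => hex ⟨s, h1, h2, t, h3, h4, h5, h6⟩
      have := CYC2 k (m - 1) (by omega) le_rfl (by omega) le_rfl (by omega) hS2 hchord0
        (fun s t hs1 hsk ht1 htm hne _ => hno2 s t hs1 hsk ht1 htm hne)
      omega

theorem stmt14 {V : Type*} [Fintype V] (G : SimpleGraph V)
    (hcyc : ∀ I : Set V, ∀ k : ℕ, 4 ≤ k → ¬ Nonempty (G.induce I ≃g cycleGraph k))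
    (hdia : ∀ I : Set V, ¬ Nonempty (G.induce I ≃g diamondGraph))
    (hclaw : ∀ I : Set V, ¬ Nonempty (G.induce I ≃g clawGraph)) :
    ∀ J J' : Set V, (G.induce J).Connected → (G.induce J').Connected →
      (G.induce (J ∪ J')).Connected → (J ∩ J').Nonempty →
      (G.induce (J ∩ J')).Connected := by
  intro J J' hJ hJ' hU hne
  rw [connected_iff]
  refine ⟨?_, hne.to_subtype⟩
  intro x y
  by_contra hxy
  have hPP : ∃ n, ∃ u v : V, ∃ hu : u ∈ J ∩ J', ∃ hv : v ∈ J ∩ J', ∃ c : ℕ → V,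
      ¬ (G.induce (J ∩ J')).Reachable ⟨u, hu⟩ ⟨v, hv⟩ ∧ GChain G J c n ∧ c 0 = u ∧ c n = v := by
    obtain ⟨n, c, hc, h0, hn⟩ := gchain_of_reachable G
      (hJ.preconnected ⟨x.1, x.2.1⟩ ⟨y.1, y.2.1⟩)
    exact ⟨n, x.1, y.1, x.2, y.2, c, by simpa using hxy, hc, h0, hn⟩
  obtain ⟨k, ⟨u, v, hu, hv, p, hre, hpchain, hp0, hpk⟩, hkmin⟩ := nat_min_spec hPP
  have huv : u ≠ v := by
    intro h
    subst h
    exact hre (Reachable.refl _)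
  have hnadj : ¬ G.Adj u v := by
    intro h
    exact hre ((by exact h : (G.induce (J ∩ J')).Adj ⟨u, hu⟩ ⟨v, hv⟩).reachable)
  have hk2 : 2 ≤ k := by
    by_contra hcon
    interval_cases k
    · exact huv (by rw [← hp0, ← hpk])
    · have h := hpchain.2 0 (by omega)
      rw [hp0, hpk] at h
      exact hnadj h
  have hpinj : ∀ i j, i ≤ k → j ≤ k → p i = p j → i = j := by
    have key : ∀ i j, i < j → j ≤ k → p i ≠ p j := by
      intro i j hij hjk heq
      rcases Nat.lt_or_ge j k with hjk' | hjk'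
      · have hstep : G.Adj (p i) (p (i + 1 + (j - i))) := by
          have he : i + 1 + (j - i) = j + 1 := by omega
          rw [he, heq]
          exact hpchain.2 j hjk'
        obtain ⟨c', hc', h0', hn'⟩ := gchain_splice G hpchain (by omega) hstep
        exact hkmin (k - (j - i)) (by omega)
          ⟨u, v, hu, hv, c', hre, hc', by rw [h0', hp0], by rw [hn', hpk]⟩
      · have hjk'' : j = k := by omega
        subst hjk''
        exact hkmin i (by omega)
          ⟨u, v, hu, hv, p, hre, gchain_trunc G hpchain (by omega), hp0, by rw [heq, hpk]⟩
    intro i j hi hj heq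
    rcases lt_trichotomy i j with h | h | h
    · exact absurd heq (key i j h hj)
    · exact h
    · exact absurd heq.symm (key j i h hi)
  have hpind : ∀ i j, i + 2 ≤ j → j ≤ k → ¬ G.Adj (p i) (p j) := by
    intro i j hij hjk hadj
    have hstep : G.Adj (p i) (p (i + 1 + (j - i - 1))) := by
      have he : i + 1 + (j - i - 1) = j := by omega
      rw [he]
      exact hadj
    obtain ⟨c', hc', h0', hn'⟩ := gchain_splice G hpchain (by omega) hstep
    exact hkmin (k - (j - i - 1)) (by omega)
      ⟨u, v, hu, hv, c', hre, hc', by rw [h0', hp0], by rw [hn', hpk]⟩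
  have hpint : ∀ i, 0 < i → i < k → p i ∉ J' := by
    intro i h0 hik hmem
    have hmem2 : p i ∈ J ∩ J' := ⟨hpchain.1 i (by omega), hmem⟩
    by_cases hra : (G.induce (J ∩ J')).Reachable ⟨u, hu⟩ ⟨p i, hmem2⟩
    · have hrb : ¬ (G.induce (J ∩ J')).Reachable ⟨p i, hmem2⟩ ⟨v, hv⟩ :=
        fun h => hre (hra.trans h)
      obtain ⟨c', hc', h0', hn'⟩ := gchain_shift G hpchain (le_of_lt hik)
      exact hkmin (k - i) (by omega) ⟨p i, v, hmem2, hv, c', hrb, hc', h0', by rw [hn', hpk]⟩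
    · exact hkmin i hik
        ⟨u, p i, hu, hmem2, p, hra, gchain_trunc G hpchain (by omega), hp0, rfl⟩
  have hQQ : ∃ n, ∃ c : ℕ → V, GChain G J' c n ∧ c 0 = u ∧ c n = v := by
    obtain ⟨n, c, hc, h0, hn⟩ := gchain_of_reachable G (hJ'.preconnected ⟨u, hu.2⟩ ⟨v, hv.2⟩)
    exact ⟨n, c, hc, h0, hn⟩
  obtain ⟨m, ⟨q, hqchain, hq0, hqm⟩, hmmin⟩ := nat_min_spec hQQ
  have hm2 : 2 ≤ m := by
    by_contra hcon
    interval_cases m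
    · exact huv (by rw [← hq0, ← hqm])
    · have h := hqchain.2 0 (by omega)
      rw [hq0, hqm] at h
      exact hnadj h
  have hqinj : ∀ i j, i ≤ m → j ≤ m → q i = q j → i = j := by
    have key : ∀ i j, i < j → j ≤ m → q i ≠ q j := by
      intro i j hij hjk heq
      rcases Nat.lt_or_ge j m with hjk' | hjk'
      · have hstep : G.Adj (q i) (q (i + 1 + (j - i))) := by
          have he : i + 1 + (j - i) = j + 1 := by omega
          rw [he, heq]
          exact hqchain.2 j hjk'
        obtain ⟨c', hc', h0', hn'⟩ := gchain_splice G hqchain (by omega) hstep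
        exact hmmin (m - (j - i)) (by omega) ⟨c', hc', by rw [h0', hq0], by rw [hn', hqm]⟩
      · have hjk'' : j = m := by omega
        subst hjk''
        exact hmmin i (by omega)
          ⟨q, gchain_trunc G hqchain (by omega), hq0, by rw [heq, hqm]⟩
    intro i j hi hj heq
    rcases lt_trichotomy i j with h | h | h
    · exact absurd heq (key i j h hj)
    · exact h
    · exact absurd heq.symm (key j i h hi)
  have hqind : ∀ i j, i + 2 ≤ j → j ≤ m → ¬ G.Adj (q i) (q j) := by
    intro i j hij hjk hadj
    have hstep : G.Adj (q i) (q (i + 1 + (j - i - 1))) := by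
      have he : i + 1 + (j - i - 1) = j := by omega
      rw [he]
      exact hadj
    obtain ⟨c', hc', h0', hn'⟩ := gchain_splice G hqchain (by omega) hstep
    exact hmmin (m - (j - i - 1)) (by omega) ⟨c', hc', by rw [h0', hq0], by rw [hn', hqm]⟩
  have hdisj : ∀ i j, 0 < i → i < k → j ≤ m → p i ≠ q j :=
    fun i j h1 h2 h3 heq => hpint i h1 h2 (heq ▸ hqchain.1 j h3)
  have hends : ¬ G.Adj (p 0) (p k) := by
    rw [hp0, hpk]
    exact hnadj
  exact lemmaA G hcyc hdia hk2 hm2 hpchain.2 hqchain.2 hpinj hqinj hpind hqind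
    (by rw [hp0, hq0]) (by rw [hpk, hqm]) hdisj hends
end
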